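/- Let X̂, Ŷ ∈ X̂_k(ℂⁿ,0), k ≥ 1, be formal vector fields of the same order k+1, with X̂ regular dicritic and Ŷ dicritic. If [X̂,Ŷ] = 0 then there exists c ∈ ℂ, c ≠ 0, such that Ŷ = c·X̂. -/

import Mathlib

noncomputable section

namespace FormalGroups

/-- Formal power series in `n` complex variables: `ℂ[[z₁,…,zₙ]]`. -/
abbrev FPS (n : ℕ) := MvPowerSeries (Fin n) ℂ

/-- Formal vector fields on `(ℂⁿ,0)`: derivations of `ℂ[[z₁,…,zₙ]]`. -/
abbrev FVF (n : ℕ) := Derivation ℂ (FPS n) (FPS n)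

/-- The group of formal diffeomorphisms of `(ℂⁿ,0)`, encoded (isomorphically,
via the pullback action on power series) as the opposite of the group of
`ℂ`-algebra automorphisms of `ℂ[[z₁,…,zₙ]]`.  For `f : FDiff n`, `f.unop` is
the pullback `h ↦ h ∘ f`; multiplication `f * g` corresponds to the
composition `f ∘ g` of formal diffeomorphisms. -/
abbrev FDiff (n : ℕ) := (FPS n ≃ₐ[ℂ] FPS n)ᵐᵒᵖ

/-- The coordinate power series `zᵢ`. -/
def Z {n : ℕ} (i : Fin n) : FPS n := MvPowerSeries.X i

/-- The `i`-th component power series `f̂ᵢ` of a formal diffeomorphism. -/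
def comp {n : ℕ} (f : FDiff n) (i : Fin n) : FPS n := f.unop (Z i)

/-- Total degree of a monomial exponent. -/
def deg {n : ℕ} (d : Fin n →₀ ℕ) : ℕ := d.sum fun _ m => m

/-- A formal vector field belongs to `X̂(ℂⁿ,0)`: its coefficients vanish at `0`. -/
def VanishesAtZero {n : ℕ} (X : FVF n) : Prop :=
  ∀ i, MvPowerSeries.constantCoeff (σ := Fin n) (R := ℂ) (X (Z i)) = 0

/-- `f` is tangent to the identity: `f(z) = z + (order ≥ 2)`. -/
def TangentToId {n : ℕ} (f : FDiff n) : Prop :=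
  (∀ i, MvPowerSeries.constantCoeff (σ := Fin n) (R := ℂ) (comp f i) = 0) ∧
  ∀ i j, MvPowerSeries.coeff (R := ℂ) (Finsupp.single j 1) (comp f i) = if j = i then 1 else 0

/-- `f = exp (t X)`, expressed coefficientwise: `f̂ᵢ = Σ_j (tʲ/j!) X̂ʲ(zᵢ)`. -/
def IsExpT {n : ℕ} (f : FDiff n) (t : ℂ) (X : FVF n) : Prop :=
  ∀ i d, MvPowerSeries.coeff (R := ℂ) d (comp f i) =
    ∑' j : ℕ, (t ^ j / (Nat.factorial j : ℂ)) * MvPowerSeries.coeff (R := ℂ) d ((⇑X)^[j] (Z i))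

/-- `f = exp X`. -/
def IsExp {n : ℕ} (f : FDiff n) (X : FVF n) : Prop := IsExpT f 1 X

/-- The vector field `X` is invariant by the formal diffeomorphism `f`
(`f_* X = X`), i.e. `X` commutes with the pullback of `f`. -/
def InvariantBy {n : ℕ} (f : FDiff n) (X : FVF n) : Prop :=
  ∀ h, X (f.unop h) = f.unop (X h)

/-- `f_* X = c • X`  (projective invariance, with factor `c`). -/
def ProjInvariantBy {n : ℕ} (f : FDiff n) (X : FVF n) (c : ℂ) : Prop :=
  ∀ h, X (f.unop h) = c • f.unop (X h)

/-- The two vector fields commute: `[X,Y] = 0`. -/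
def CommuteVF {n : ℕ} (X Y : FVF n) : Prop := ∀ h, X (Y h) = Y (X h)

/-- All terms of the power series have degree at least `m`. -/
def OrderGE {n : ℕ} (F : FPS n) (m : ℕ) : Prop :=
  ∀ d, deg d < m → MvPowerSeries.coeff (R := ℂ) d F = 0

/-- The vector field vanishes to order at least `m` at the origin. -/
def VFOrderGE {n : ℕ} (X : FVF n) (m : ℕ) : Prop := ∀ i, OrderGE (X (Z i)) m

/-- `f` is tangent to the identity with order (exactly) `k`:
`f(z) = z + f_{k+1}(z) + ⋯` with `f_{k+1} ≠ 0`. -/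
def TangentOrder {n : ℕ} (f : FDiff n) (k : ℕ) : Prop :=
  1 ≤ k ∧
  (∀ i d, deg d ≤ k → MvPowerSeries.coeff (R := ℂ) d (comp f i) = MvPowerSeries.coeff (R := ℂ) d (Z i)) ∧
  ∃ i d, deg d = k + 1 ∧ MvPowerSeries.coeff (R := ℂ) d (comp f i) ≠ 0

/-- A dicritic diffeomorphism of order `k`: `f(z) = z + p(z)·z + (order ≥ k+2)`,
with `p ≠ 0` homogeneous of degree `k`. -/
def IsDicriticDiffeo {n : ℕ} (f : FDiff n) (k : ℕ) : Prop :=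
  1 ≤ k ∧
  (∀ i d, deg d ≤ k → MvPowerSeries.coeff (R := ℂ) d (comp f i) = MvPowerSeries.coeff (R := ℂ) d (Z i)) ∧
  ∃ p : MvPolynomial (Fin n) ℂ, p.IsHomogeneous k ∧ p ≠ 0 ∧
    ∀ i d, deg d = k + 1 →
      MvPowerSeries.coeff (R := ℂ) d (comp f i) = MvPowerSeries.coeff (R := ℂ) d ((p : FPS n) * Z i)

/-- A dicritic vector field of index `k` (order `k+1`):
`X = p(z)·R⃗ + (order ≥ k+2)` with `p ≠ 0` homogeneous of degree `k`,
where `R⃗ = Σ zᵢ ∂/∂zᵢ` is the radial vector field. -/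
def IsDicriticVF {n : ℕ} (X : FVF n) (k : ℕ) : Prop :=
  1 ≤ k ∧ VFOrderGE X (k + 1) ∧
  ∃ p : MvPolynomial (Fin n) ℂ, p.IsHomogeneous k ∧ p ≠ 0 ∧
    ∀ i d, deg d = k + 1 →
      MvPowerSeries.coeff (R := ℂ) d (X (Z i)) = MvPowerSeries.coeff (R := ℂ) d ((p : FPS n) * Z i)

/-- A regular dicritic vector field of index `k`: dicritic, and for the
homogeneous parts `pᵢ = q i` of degree `k+2` there are indices `i₀, j₀` with
`p` and `z_{j₀} q_{i₀} − z_{i₀} q_{j₀}` coprime. -/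
def IsRegDicriticVF {n : ℕ} (X : FVF n) (k : ℕ) : Prop :=
  1 ≤ k ∧ VFOrderGE X (k + 1) ∧
  ∃ (p : MvPolynomial (Fin n) ℂ) (q : Fin n → MvPolynomial (Fin n) ℂ),
    p.IsHomogeneous k ∧ p ≠ 0 ∧
    (∀ i d, deg d = k + 1 →
      MvPowerSeries.coeff (R := ℂ) d (X (Z i)) = MvPowerSeries.coeff (R := ℂ) d ((p : FPS n) * Z i)) ∧
    (∀ i, (q i).IsHomogeneous (k + 2)) ∧
    (∀ i d, deg d = k + 2 →
      MvPowerSeries.coeff (R := ℂ) d (X (Z i)) = MvPolynomial.coeff d (q i)) ∧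
    ∃ i₀ j₀ : Fin n,
      IsRelPrime p (MvPolynomial.X j₀ * q i₀ - MvPolynomial.X i₀ * q j₀)

/-- A regular dicritic diffeomorphism: its infinitesimal generator
`log f` is a regular dicritic vector field. -/
def IsRegDicriticDiffeo {n : ℕ} (f : FDiff n) (k : ℕ) : Prop :=
  ∃ X : FVF n, IsRegDicriticVF X k ∧ IsExp f X

/-- The derivative (linear part) `Df(0)` of `f` at `0`, as a matrix. -/
def Dmat {n : ℕ} (f : FDiff n) : Matrix (Fin n) (Fin n) ℂ :=
  Matrix.of fun i j => MvPowerSeries.coeff (R := ℂ) (Finsupp.single j 1) (comp f i)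

/-- `L` is the linear diffeomorphism `z ↦ M z`. -/
def IsLinearWith {n : ℕ} (L : FDiff n) (M : Matrix (Fin n) (Fin n) ℂ) : Prop :=
  ∀ i, comp L i = ∑ j, M i j • Z j

/-- Formal partial derivative `∂/∂zᵢ` on `ℂ[[z₁,…,zₙ]]`. -/
def pd {n : ℕ} (i : Fin n) (F : FPS n) : FPS n :=
  fun d => ((d i : ℂ) + 1) * MvPowerSeries.coeff (R := ℂ) (d + Finsupp.single i 1) F

/-- A formal meromorphic one-form `Σⱼ (Aⱼ/C) dzⱼ`, presented with a common
denominator `C ≠ 0` (its coefficients are elements `Aⱼ/C` of the fraction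
field `K̂ₙ` of `ℂ[[z₁,…,zₙ]]`). -/
structure MeroForm (n : ℕ) where
  A : Fin n → FPS n
  C : FPS n
  hC : C ≠ 0

/-- The one-form is closed (`dω = 0`), with denominators cleared. -/
def FormClosed {n : ℕ} (ω : MeroForm n) : Prop :=
  ∀ i j, pd i (ω.A j) * ω.C - ω.A j * pd i ω.C = pd j (ω.A i) * ω.C - ω.A i * pd j ω.C

/-- `g*ω = ω` (invariance of the one-form under pullback), denominators cleared. -/
def FormInvariantBy {n : ℕ} (g : FDiff n) (ω : MeroForm n) : Prop :=
  ∀ j, (∑ i, g.unop (ω.A i) * pd j (comp g i)) * ω.C = ω.A j * g.unop ω.C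

/-- `g*ω = a ω₁ + b ω₂`, denominators cleared. -/
def FormPullbackComb {n : ℕ} (g : FDiff n) (ω ω₁ ω₂ : MeroForm n) (a b : ℂ) : Prop :=
  ∀ j, (∑ i, g.unop (ω.A i) * pd j (comp g i)) * (ω₁.C * ω₂.C)
    = (a • (ω₁.A j * ω₂.C) + b • (ω₂.A j * ω₁.C)) * g.unop ω.C

/-- `ω₁, ω₂` are `ℂ`-linearly independent as meromorphic one-forms. -/
def FormsIndepC {n : ℕ} (ω₁ ω₂ : MeroForm n) : Prop :=
  ∀ a b : ℂ, (∀ j, a • (ω₁.A j * ω₂.C) + b • (ω₂.A j * ω₁.C) = 0) → a = 0 ∧ b = 0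

/-- A formal curve: a nonzero non-invertible formal series. -/
def IsFormalCurve (φ : FPS 2) : Prop :=
  φ ≠ 0 ∧ MvPowerSeries.constantCoeff (σ := Fin 2) (R := ℂ) φ = 0

/-- The formal curve `φ` is invariant by `f`: `φ ∘ f = u·φ` for a unit `u`. -/
def CurveInvariantBy (f : FDiff 2) (φ : FPS 2) : Prop :=
  ∃ u : FPS 2, IsUnit u ∧ f.unop φ = u * φ

/-- Linear coefficient of `φ` in the variable `zᵢ` (the differential `Dφ(0)`). -/
def lc (i : Fin 2) (φ : FPS 2) : ℂ := MvPowerSeries.coeff (R := ℂ) (Finsupp.single i 1) φ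

/-- The formal curves `φ, ψ` are transverse: each tangent space (kernel of the
differential at `0`) is one-dimensional and together they span `ℂ²`;
equivalently the two differentials at `0` are linearly independent. -/
def Transverse (φ ψ : FPS 2) : Prop :=
  lc 0 φ * lc 1 ψ - lc 1 φ * lc 0 ψ ≠ 0

/-- The formal power series is convergent (defines a germ of holomorphic
function): its coefficients grow at most geometrically. -/
def IsConvergent {n : ℕ} (F : FPS n) : Prop :=
  ∃ M A : ℝ, ∀ d, ‖MvPowerSeries.coeff (R := ℂ) d F‖ ≤ M * A ^ deg d

/-- `g* X = (p/q)·X`, denominators cleared: the pullback `g* X = (g⁻¹)_* X`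
of the vector field `X` equals the rational multiple `(p/q) X`. -/
def PullbackEqRat {n : ℕ} (g : FDiff n) (X : FVF n) (p q : FPS n) : Prop :=
  ∀ h, q * g.unop (X (g.unop.symm h)) = p * X h

/-- `g* X = s X₁ + t X₂` (pullback of `X` is a constant combination). -/
def PullbackEqComb {n : ℕ} (g : FDiff n) (X X₁ X₂ : FVF n) (s t : ℂ) : Prop :=
  ∀ h, g.unop (X (g.unop.symm h)) = s • X₁ h + t • X₂ h

end FormalGroups

namespace FormalGroups
open MvPowerSeries

open Finsupp

variable {n : ℕ}

lemma deg_add (a b : Fin n →₀ ℕ) : deg (a + b) = deg a + deg b := by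
  classical
  simp [deg, Finsupp.sum_fintype, Finset.sum_add_distrib]

lemma deg_single (i : Fin n) (m : ℕ) : deg (single i m) = m := by
  simp [deg, Finsupp.sum_fintype, Finsupp.single_apply]

lemma deg_eq_zero_iff (d : Fin n →₀ ℕ) : deg d = 0 ↔ d = 0 := by
  classical
  constructor
  · intro h
    ext i
    have : ∑ i, d i = 0 := by simpa [deg, Finsupp.sum_fintype] using h
    exact Finset.sum_eq_zero_iff.mp this i (Finset.mem_univ i)
  · rintro rfl; simp [deg]

lemma deg_eq_degree (d : Fin n →₀ ℕ) : deg d = d.degree := by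
  simp [deg, Finsupp.degree_apply, Finsupp.sum]

lemma coeff_eq (F : FPS n) (d : Fin n →₀ ℕ) : MvPowerSeries.coeff (R := ℂ) d F = F d := rfl

/-- coefficient of `X i * G`. -/
lemma coeff_X_mul (i : Fin n) (G : FPS n) (d : Fin n →₀ ℕ) :
    MvPowerSeries.coeff (R := ℂ) d (Z i * G)
      = if single i 1 ≤ d then MvPowerSeries.coeff (R := ℂ) (d - single i 1) G else 0 := by
  classical
  rw [MvPowerSeries.coeff_mul]
  by_cases h : single i 1 ≤ d
  · rw [Finset.sum_eq_single (single i 1, d - single i 1)]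
    · have : (1:ℕ) ≤ d i := by simpa [Finsupp.single_le_iff] using h
      simp [Z, MvPowerSeries.coeff_X, this]
    · rintro ⟨a, b⟩ hab hne
      rw [Finset.HasAntidiagonal.mem_antidiagonal] at hab
      by_cases ha : a = single i 1
      · subst ha
        exfalso; apply hne
        have : b = d - single i 1 := eq_tsub_of_add_eq (by rw [add_comm]; exact hab)
        simp [this]
      · simp [Z, MvPowerSeries.coeff_X, ha]
    · intro hmem
      exfalso; apply hmem
      rw [Finset.HasAntidiagonal.mem_antidiagonal]
      exact add_tsub_cancel_of_le h
  · rw [if_neg h]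
    apply Finset.sum_eq_zero
    rintro ⟨a, b⟩ hab
    rw [Finset.HasAntidiagonal.mem_antidiagonal] at hab
    have ha : a ≠ single i 1 := by
      rintro rfl
      exact h (hab ▸ le_add_right le_rfl)
    simp [Z, MvPowerSeries.coeff_X, ha]

/-- the "quotient" series in the one-step decomposition. -/
def Hq (F : FPS n) (i : Fin n) : FPS n :=
  fun b => if (b + single i 1).support.min = (i : WithTop (Fin n)) then F (b + single i 1) else 0

lemma decomp (F : FPS n) :
    F = (MvPowerSeries.constantCoeff (σ := Fin n) (R := ℂ) F) • 1 + ∑ i, Z i * Hq F i := by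
  classical
  ext d
  rw [map_add, map_sum]
  by_cases hd : d = 0
  · subst hd
    have : ∀ i, MvPowerSeries.coeff (R := ℂ) (0 : Fin n →₀ ℕ) (Z i * Hq F i) = 0 := by
      intro i
      rw [coeff_X_mul, if_neg]
      intro h
      have := h i
      simp at this
    simp [this, MvPowerSeries.coeff_smul, MvPowerSeries.coeff_one]
  · have hsupp : d.support.Nonempty := by
      rw [Finsupp.support_nonempty_iff]; exact hd
    set i0 := d.support.min' hsupp with hi0
    have hmin : d.support.min = (i0 : WithTop (Fin n)) := (Finset.coe_min' hsupp).symm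
    have hstep : ∀ i, MvPowerSeries.coeff (R := ℂ) d (Z i * Hq F i)
        = if i = i0 then F d else 0 := by
      intro i
      rw [coeff_X_mul]
      by_cases hle : single i 1 ≤ d
      · have hsub : d - single i 1 + single i 1 = d := tsub_add_cancel_of_le hle
        rw [if_pos hle]
        show (if _ then _ else _) = _
        rw [hsub]
        by_cases hi : i = i0
        · subst hi; rw [if_pos hmin, if_pos rfl]
        · rw [if_neg, if_neg hi]
          rw [hmin]
          intro hcon
          exact hi (WithTop.coe_injective hcon).symm
      · rw [if_neg hle]
        by_cases hi : i = i0
        · exfalso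
          subst hi
          apply hle
          rw [Finsupp.single_le_iff]
          have : i0 ∈ d.support := Finset.min'_mem _ hsupp
          have h2 : d i0 ≠ 0 := Finsupp.mem_support_iff.mp this
          omega
        · rw [if_neg hi]
    rw [Finset.sum_congr rfl (fun i _ => hstep i)]
    simp [MvPowerSeries.coeff_smul, MvPowerSeries.coeff_one, hd, coeff_eq]

lemma deg_sub_lt {d : Fin n →₀ ℕ} {i : Fin n} (h : single i 1 ≤ d) :
    deg (d - single i 1) + 1 = deg d := by
  have : d - single i 1 + single i 1 = d := tsub_add_cancel_of_le h
  calc deg (d - single i 1) + 1 = deg (d - single i 1) + deg (single i 1) := by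
        rw [deg_single]
    _ = deg (d - single i 1 + single i 1) := (deg_add _ _).symm
    _ = deg d := by rw [this]

lemma D_eq_sum_Hq (D : FVF n) (hD : ∀ i, D (Z i) = 0) (F : FPS n) :
    D F = ∑ i, Z i * D (Hq F i) := by
  conv_lhs => rw [decomp F]
  rw [map_add, Derivation.map_smul, Derivation.map_one_eq_zero, smul_zero, zero_add, map_sum]
  apply Finset.sum_congr rfl
  intro i _
  rw [Derivation.leibniz, hD i, smul_zero, add_zero, smul_eq_mul]

lemma derivation_zero_of_coords (D : FVF n) (hD : ∀ i, D (Z i) = 0) (F : FPS n) : D F = 0 := by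
  have key : ∀ N : ℕ, ∀ (F : FPS n) (d : Fin n →₀ ℕ), deg d ≤ N →
      MvPowerSeries.coeff (R := ℂ) d (D F) = 0 := by
    intro N
    induction N with
    | zero =>
      intro F d hd
      rw [D_eq_sum_Hq D hD, map_sum]
      apply Finset.sum_eq_zero
      intro i _
      rw [coeff_X_mul]
      split
      · next h =>
        exfalso
        have := deg_sub_lt h
        omega
      · rfl
    | succ N ih =>
      intro F d hd
      rw [D_eq_sum_Hq D hD, map_sum]
      apply Finset.sum_eq_zero
      intro i _
      rw [coeff_X_mul]
      split
      · next h =>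
        exact ih _ _ (by have := deg_sub_lt h; omega)
      · rfl
  ext d
  rw [map_zero]
  exact key (deg d) F d le_rfl

lemma coeff_pd (i : Fin n) (F : FPS n) (d : Fin n →₀ ℕ) :
    MvPowerSeries.coeff (R := ℂ) d (pd i F) = ((d i : ℂ) + 1) * MvPowerSeries.coeff (R := ℂ) (d + single i 1) F := rfl

lemma sum_antidiag_shift (j : Fin n) (f : (Fin n →₀ ℕ) → (Fin n →₀ ℕ) → ℂ) (d : Fin n →₀ ℕ) :
    (Finset.HasAntidiagonal.antidiagonal (d + single j 1)).sum
        (fun p : (Fin n →₀ ℕ) × (Fin n →₀ ℕ) => (p.1 j : ℂ) * f p.1 p.2)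
      = (Finset.HasAntidiagonal.antidiagonal d).sum
        (fun p : (Fin n →₀ ℕ) × (Fin n →₀ ℕ) => ((p.1 j : ℂ) + 1) * f (p.1 + single j 1) p.2) := by
  classical
  have h1 : ((Finset.HasAntidiagonal.antidiagonal (d + single j 1)).filter
        (fun p : (Fin n →₀ ℕ) × (Fin n →₀ ℕ) => p.1 j ≠ 0)).sum
          (fun p : (Fin n →₀ ℕ) × (Fin n →₀ ℕ) => (p.1 j : ℂ) * f p.1 p.2)
      = (Finset.HasAntidiagonal.antidiagonal (d + single j 1)).sum
          (fun p : (Fin n →₀ ℕ) × (Fin n →₀ ℕ) => (p.1 j : ℂ) * f p.1 p.2) := by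
    apply Finset.sum_filter_of_ne
    intro x _ hx h0
    apply hx
    rw [h0]
    simp
  rw [← h1]
  refine Finset.sum_bij'
    (fun (p : (Fin n →₀ ℕ) × (Fin n →₀ ℕ)) (_ : p ∈ _) => (p.1 - single j 1, p.2))
    (fun (p : (Fin n →₀ ℕ) × (Fin n →₀ ℕ)) (_ : p ∈ _) => (p.1 + single j 1, p.2))
    ?hi ?hj ?left ?right ?hval
  case hi =>
    rintro ⟨a, b⟩ ha
    simp only [Finset.mem_filter, Finset.HasAntidiagonal.mem_antidiagonal] at ha
    obtain ⟨hab, hj'⟩ := ha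
    rw [Finset.HasAntidiagonal.mem_antidiagonal]
    have hle : single j 1 ≤ a := by rw [Finsupp.single_le_iff]; omega
    have heq : a - single j 1 + single j 1 = a := tsub_add_cancel_of_le hle
    have h2 : a - single j 1 + b + single j 1 = d + single j 1 := by
      rw [add_right_comm, heq, hab]
    exact add_right_cancel h2
  case hj =>
    rintro ⟨a, b⟩ ha
    rw [Finset.HasAntidiagonal.mem_antidiagonal] at ha
    simp only [Finset.mem_filter, Finset.HasAntidiagonal.mem_antidiagonal]
    constructor
    · rw [add_right_comm, ha]
    · simp
  case left =>
    rintro ⟨a, b⟩ ha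
    simp only [Finset.mem_filter, Finset.HasAntidiagonal.mem_antidiagonal] at ha
    have hle : single j 1 ≤ a := by rw [Finsupp.single_le_iff]; omega
    simp only [Prod.mk.injEq]
    exact ⟨tsub_add_cancel_of_le hle, trivial⟩
  case right =>
    rintro ⟨a, b⟩ _
    simp only [Prod.mk.injEq]
    exact ⟨add_tsub_cancel_right a _, trivial⟩
  case hval =>
    rintro ⟨a, b⟩ ha
    simp only [Finset.mem_filter, Finset.HasAntidiagonal.mem_antidiagonal] at ha
    obtain ⟨hab, hj'⟩ := ha
    have hle : single j 1 ≤ a := by rw [Finsupp.single_le_iff]; omega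
    have h1' : (a - single j 1 : Fin n →₀ ℕ) j = a j - 1 := by
      rw [Finsupp.tsub_apply]
      simp
    show (a j : ℂ) * f a b = _
    rw [tsub_add_cancel_of_le hle, h1']
    have hcast : ((a j - 1 : ℕ) : ℂ) + 1 = (a j : ℂ) := by
      have h2 : 1 ≤ a j := by omega
      rw [Nat.cast_sub h2]
      push_cast
      ring
    rw [hcast]

lemma sum_antidiag_swap (m : Fin n →₀ ℕ) (f : (Fin n →₀ ℕ) × (Fin n →₀ ℕ) → ℂ) :
    ∑ p ∈ Finset.HasAntidiagonal.antidiagonal m, f p = ∑ p ∈ Finset.HasAntidiagonal.antidiagonal m, f p.swap := by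
  conv_lhs => rw [← Finset.HasAntidiagonal.map_swap_antidiagonal (n := m)]
  rw [Finset.sum_map]
  rfl

lemma pd_mul (j : Fin n) (F G : FPS n) : pd j (F * G) = pd j F * G + F * pd j G := by
  ext d
  rw [map_add, coeff_pd, MvPowerSeries.coeff_mul, MvPowerSeries.coeff_mul, MvPowerSeries.coeff_mul,
    Finset.mul_sum]
  have key : ∀ p ∈ Finset.HasAntidiagonal.antidiagonal (d + single j 1),
      ((d j : ℂ) + 1) * (MvPowerSeries.coeff (R := ℂ) p.1 F * MvPowerSeries.coeff (R := ℂ) p.2 G)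
      = (p.1 j : ℂ) * (MvPowerSeries.coeff (R := ℂ) p.1 F * MvPowerSeries.coeff (R := ℂ) p.2 G)
        + (p.2 j : ℂ) * (MvPowerSeries.coeff (R := ℂ) p.1 F * MvPowerSeries.coeff (R := ℂ) p.2 G) := by
    rintro ⟨a, b⟩ hab
    rw [Finset.HasAntidiagonal.mem_antidiagonal] at hab
    have : a j + b j = d j + 1 := by
      have := congrArg (fun x => x j) hab
      simpa using this
    have hc : ((d j : ℂ) + 1) = (a j : ℂ) + (b j : ℂ) := by
      have h2 := congrArg (fun x : ℕ => (x : ℂ)) this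
      push_cast at h2
      linear_combination -h2
    rw [hc]; ring
  rw [Finset.sum_congr rfl key, Finset.sum_add_distrib]
  congr 1
  · rw [sum_antidiag_shift j (fun a b => MvPowerSeries.coeff (R := ℂ) a F * MvPowerSeries.coeff (R := ℂ) b G)]
    apply Finset.sum_congr rfl
    rintro ⟨a, b⟩ _
    rw [coeff_pd]
    ring
  · rw [sum_antidiag_swap _ (fun p => (p.2 j : ℂ) * (MvPowerSeries.coeff (R := ℂ) p.1 F * MvPowerSeries.coeff (R := ℂ) p.2 G))]
    simp only [Prod.fst_swap, Prod.snd_swap]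
    rw [sum_antidiag_shift j (fun a b => MvPowerSeries.coeff (R := ℂ) b F * MvPowerSeries.coeff (R := ℂ) a G)]
    rw [sum_antidiag_swap d (fun p => MvPowerSeries.coeff (R := ℂ) p.1 F * MvPowerSeries.coeff (R := ℂ) p.2 (pd j G))]
    simp only [Prod.fst_swap, Prod.snd_swap]
    apply Finset.sum_congr rfl
    rintro ⟨a, b⟩ _
    rw [coeff_pd]
    ring

lemma pd_add (i : Fin n) (F G : FPS n) : pd i (F + G) = pd i F + pd i G := by
  ext d
  rw [map_add, coeff_pd, coeff_pd, coeff_pd, map_add]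
  ring

lemma pd_smul (i : Fin n) (c : ℂ) (F : FPS n) : pd i (c • F) = c • pd i F := by
  ext d
  rw [coeff_pd, MvPowerSeries.coeff_smul, MvPowerSeries.coeff_smul, coeff_pd]
  ring

lemma pd_one (i : Fin n) : pd i (1 : FPS n) = 0 := by
  ext d
  rw [coeff_pd, MvPowerSeries.coeff_one, if_neg, map_zero, mul_zero]
  intro h
  have := congrArg (fun x : Fin n →₀ ℕ => x i) h
  simp at this

lemma pd_Z (i l : Fin n) : pd i (Z l) = if i = l then (1 : FPS n) else 0 := by
  classical
  ext d
  rw [coeff_pd]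
  rw [show MvPowerSeries.coeff (R := ℂ) (d + single i 1) (Z l)
      = if d + single i 1 = single l 1 then 1 else 0 from MvPowerSeries.coeff_X _ _]
  by_cases hil : i = l
  · subst hil
    rw [if_pos rfl]
    by_cases hd : d = 0
    · subst hd
      rw [if_pos (by rw [zero_add]), MvPowerSeries.coeff_one, if_pos rfl]
      simp
    · rw [if_neg, mul_zero, MvPowerSeries.coeff_one, if_neg hd]
      intro h
      apply hd
      have : d + single i 1 = 0 + single i 1 := by rw [zero_add, h]
      exact add_right_cancel this
  · rw [if_neg hil, if_neg, mul_zero, map_zero]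
    intro h
    have := congrArg (fun x : Fin n →₀ ℕ => x i) h
    simp [Finsupp.single_apply, Ne.symm hil] at this

/-- `Σᵢ D(zᵢ) ∂ᵢ` as a derivation. -/
def sumD (D : FVF n) : FVF n :=
  { toFun := fun F => ∑ i, D (Z i) * pd i F
    map_add' := fun F G => by
      simp only [pd_add, mul_add]
      rw [Finset.sum_add_distrib]
    map_smul' := fun c F => by
      simp only [pd_smul, RingHom.id_apply]
      rw [Finset.smul_sum]
      apply Finset.sum_congr rfl
      intro i _
      exact mul_smul_comm c (D (Z i)) (pd i F)
    map_one_eq_zero' := by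
      simp only [LinearMap.coe_mk, AddHom.coe_mk, pd_one, mul_zero, Finset.sum_const_zero]
    leibniz' := fun a b => by
      simp only [LinearMap.coe_mk, AddHom.coe_mk, pd_mul, mul_add, smul_eq_mul]
      rw [Finset.sum_add_distrib, Finset.mul_sum, Finset.mul_sum, add_comm]
      congr 1
      · apply Finset.sum_congr rfl; intro i _; ring
      · apply Finset.sum_congr rfl; intro i _; ring }

lemma sumD_apply (D : FVF n) (F : FPS n) : sumD D F = ∑ i, D (Z i) * pd i F := rfl

/-- Every derivation is `Σᵢ D(zᵢ) ∂ᵢ`. -/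
lemma deriv_eq_sum (D : FVF n) (h : FPS n) : D h = ∑ i, D (Z i) * pd i h := by
  classical
  have hz : ∀ l, (D - sumD D) (Z l) = 0 := by
    intro l
    rw [Derivation.sub_apply, sub_eq_zero, sumD_apply]
    rw [Finset.sum_congr rfl (fun i (_ : i ∈ Finset.univ) => by rw [pd_Z i l])]
    rw [Finset.sum_eq_single l]
    · simp
    · intro b _ hb
      rw [if_neg hb, mul_zero]
    · intro hc
      exact absurd (Finset.mem_univ l) hc
  have := derivation_zero_of_coords (D - sumD D) hz h
  rw [Derivation.sub_apply, sub_eq_zero] at this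
  rw [this, sumD_apply]

/-! ### Homogeneous slices of power series -/

def Hm (m : ℕ) (F : FPS n) : FPS n := fun e => if deg e = m then MvPowerSeries.coeff (R := ℂ) e F else 0

lemma coeff_Hm (m : ℕ) (F : FPS n) (e : Fin n →₀ ℕ) :
    MvPowerSeries.coeff (R := ℂ) e (Hm m F) = if deg e = m then MvPowerSeries.coeff (R := ℂ) e F else 0 := rfl

lemma Hm_eq_zero {F : FPS n} {α : ℕ} (h : OrderGE F α) {s : ℕ} (hs : s < α) : Hm s F = 0 := by
  ext e
  rw [coeff_Hm, map_zero]
  split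
  · next he => exact h e (he ▸ hs)
  · rfl

lemma coeff_mul_split (F G : FPS n) (d : Fin n →₀ ℕ) :
    MvPowerSeries.coeff (R := ℂ) d (F * G)
      = ∑ s ∈ Finset.range (deg d + 1),
          MvPowerSeries.coeff (R := ℂ) d (Hm s F * Hm (deg d - s) G) := by
  classical
  simp only [MvPowerSeries.coeff_mul]
  rw [Finset.sum_comm]
  apply Finset.sum_congr rfl
  rintro ⟨a, b⟩ hab
  rw [Finset.HasAntidiagonal.mem_antidiagonal] at hab
  dsimp only
  have hdeg : deg a + deg b = deg d := by rw [← deg_add, hab]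
  rw [Finset.sum_eq_single (deg a)]
  · rw [coeff_Hm, coeff_Hm, if_pos rfl, if_pos (by omega)]
  · intro s _ hs
    rw [coeff_Hm, if_neg (fun h => hs h.symm), zero_mul]
  · intro hmem
    exact absurd (Finset.mem_range.mpr (by omega)) hmem

lemma coeff_Hm_mul_Hm {s t : ℕ} (F G : FPS n) {d : Fin n →₀ ℕ} (hd : deg d ≠ s + t) :
    MvPowerSeries.coeff (R := ℂ) d (Hm s F * Hm t G) = 0 := by
  rw [MvPowerSeries.coeff_mul]
  apply Finset.sum_eq_zero
  rintro ⟨a, b⟩ hab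
  rw [Finset.HasAntidiagonal.mem_antidiagonal] at hab
  dsimp only
  have hdeg : deg a + deg b = deg d := by rw [← deg_add, hab]
  rw [coeff_Hm, coeff_Hm]
  by_cases h1 : deg a = s
  · rw [if_neg (show ¬ deg b = t by omega), mul_zero]
  · rw [if_neg h1, zero_mul]

lemma conv_exact {F G : FPS n} {α β : ℕ} (hF : OrderGE F α) (hG : OrderGE G β)
    {d : Fin n →₀ ℕ} (hd : deg d = α + β) :
    MvPowerSeries.coeff (R := ℂ) d (F * G) = MvPowerSeries.coeff (R := ℂ) d (Hm α F * Hm β G) := by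
  rw [coeff_mul_split]
  rw [Finset.sum_eq_single α]
  · rw [hd, Nat.add_sub_cancel_left]
  · intro s hs hne
    rw [Finset.mem_range] at hs
    rcases Nat.lt_or_ge s α with h | h
    · rw [Hm_eq_zero hF h, zero_mul, map_zero]
    · have hs' : α < s := by omega
      rw [Hm_eq_zero hG (show deg d - s < β by omega), mul_zero, map_zero]
  · intro hmem
    exact absurd (Finset.mem_range.mpr (by omega)) hmem

lemma conv_succ {F G : FPS n} {α β : ℕ} (hF : OrderGE F α) (hG : OrderGE G β)
    {d : Fin n →₀ ℕ} (hd : deg d = α + β + 1) :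
    MvPowerSeries.coeff (R := ℂ) d (F * G)
      = MvPowerSeries.coeff (R := ℂ) d (Hm α F * Hm (β + 1) G)
        + MvPowerSeries.coeff (R := ℂ) d (Hm (α + 1) F * Hm β G) := by
  rw [coeff_mul_split]
  have hsub : ({α, α + 1} : Finset ℕ) ⊆ Finset.range (deg d + 1) := by
    intro s hs
    simp only [Finset.mem_insert, Finset.mem_singleton] at hs
    rw [Finset.mem_range]
    rcases hs with rfl | rfl <;> omega
  rw [← Finset.sum_subset hsub]
  · have h1 : deg d - α = β + 1 := by omega
    have h2 : deg d - (α + 1) = β := by omega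
    rw [Finset.sum_pair (by omega : α ≠ α + 1), h1, h2]
  · intro s hs hns
    rw [Finset.mem_range] at hs
    simp only [Finset.mem_insert, Finset.mem_singleton] at hns
    push_neg at hns
    obtain ⟨h1, h2⟩ := hns
    rcases Nat.lt_or_ge s α with h | h
    · rw [Hm_eq_zero hF h, zero_mul, map_zero]
    · have : α + 1 < s := by omega
      rw [Hm_eq_zero hG (show deg d - s < β by omega), mul_zero, map_zero]

lemma OrderGE_pd {F : FPS n} {m : ℕ} (h : OrderGE F (m + 1)) (j : Fin n) :
    OrderGE (pd j F) m := by
  intro e he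
  rw [coeff_pd, h _ (by rw [deg_add, deg_single]; omega), mul_zero]

lemma Hm_pd (s : ℕ) (j : Fin n) (F : FPS n) : Hm s (pd j F) = pd j (Hm (s + 1) F) := by
  ext e
  have L : MvPowerSeries.coeff (R := ℂ) e (Hm s (pd j F))
      = if deg e = s then ((e j : ℂ) + 1) * MvPowerSeries.coeff (R := ℂ) (e + single j 1) F else 0 := by
    rw [coeff_Hm, coeff_pd]
  have R : MvPowerSeries.coeff (R := ℂ) e (pd j (Hm (s + 1) F))
      = ((e j : ℂ) + 1) * (if deg (e + single j 1) = s + 1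
          then MvPowerSeries.coeff (R := ℂ) (e + single j 1) F else 0) := by
    rw [coeff_pd, coeff_Hm]
  rw [L, R]
  have hdeg : deg (e + single j 1) = deg e + 1 := by rw [deg_add, deg_single]
  by_cases h : deg e = s
  · rw [if_pos h, if_pos (by omega)]
  · rw [if_neg h, if_neg (by omega), mul_zero]

/-! ### Polynomials from homogeneous slices -/

open MvPolynomial in
lemma apply_le_deg (e : Fin n →₀ ℕ) (i : Fin n) : e i ≤ deg e := by
  classical
  have : deg e = ∑ j, e j := by simp [deg, Finsupp.sum_fintype]
  rw [this]
  exact Finset.single_le_sum (f := fun j => e j) (fun _ _ => Nat.zero_le _) (Finset.mem_univ i)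

def Emon (m : ℕ) : Finset (Fin n →₀ ℕ) :=
  (Finset.Iic (Finsupp.equivFunOnFinite.symm (fun _ => m))).filter (fun e => deg e = m)

lemma mem_Emon_iff (m : ℕ) (e : Fin n →₀ ℕ) : e ∈ Emon m ↔ deg e = m := by
  classical
  rw [Emon, Finset.mem_filter, Finset.mem_Iic]
  constructor
  · exact fun h => h.2
  · intro h
    refine ⟨?_, h⟩
    intro i
    simpa using (h ▸ apply_le_deg e i)

def HmP (m : ℕ) (G : FPS n) : MvPolynomial (Fin n) ℂ :=
  ∑ e ∈ Emon m, MvPolynomial.monomial e (MvPowerSeries.coeff (R := ℂ) e G)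

lemma HmP_coeff (m : ℕ) (G : FPS n) (d : Fin n →₀ ℕ) :
    MvPolynomial.coeff d (HmP m G) = if deg d = m then MvPowerSeries.coeff (R := ℂ) d G else 0 := by
  classical
  rw [HmP]
  rw [show (∑ e ∈ Emon m, MvPolynomial.monomial e (MvPowerSeries.coeff (R := ℂ) e G)).coeff d
    = ∑ e ∈ Emon m, (MvPolynomial.monomial e (MvPowerSeries.coeff (R := ℂ) e G)).coeff d from
      MvPolynomial.coeff_sum _ _ _]
  simp only [MvPolynomial.coeff_monomial]
  rw [Finset.sum_ite_eq' (Emon m) d (fun e => MvPowerSeries.coeff (R := ℂ) e G)]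
  by_cases h : deg d = m
  · rw [if_pos ((mem_Emon_iff m d).mpr h), if_pos h]
  · rw [if_neg (fun hc => h ((mem_Emon_iff m d).mp hc)), if_neg h]

lemma HmP_isHomogeneous (m : ℕ) (G : FPS n) : (HmP m G).IsHomogeneous m := by
  apply MvPolynomial.IsHomogeneous.sum
  intro e he
  exact MvPolynomial.isHomogeneous_monomial _ ((deg_eq_degree e).symm.trans ((mem_Emon_iff m e).mp he))

lemma Hm_eq_coe_HmP (m : ℕ) (G : FPS n) : Hm m G = ((HmP m G : MvPolynomial (Fin n) ℂ) : FPS n) := by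
  ext e
  rw [coeff_Hm, MvPolynomial.coeff_coe, HmP_coeff]

lemma Hm_eq_coe {F : FPS n} {P : MvPolynomial (Fin n) ℂ} {m : ℕ} (hP : P.IsHomogeneous m)
    (h : ∀ d, deg d = m → MvPowerSeries.coeff (R := ℂ) d F = MvPowerSeries.coeff (R := ℂ) d (P : FPS n)) :
    Hm m F = (P : FPS n) := by
  ext e
  rw [coeff_Hm]
  by_cases he : deg e = m
  · rw [if_pos he, h e he]
  · rw [if_neg he, MvPolynomial.coeff_coe]
    exact (hP.coeff_eq_zero (by rwa [← deg_eq_degree])).symm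

lemma homog_ext {P Q : MvPolynomial (Fin n) ℂ} {m : ℕ}
    (hP : P.IsHomogeneous m) (hQ : Q.IsHomogeneous m)
    (h : ∀ d, deg d = m → MvPolynomial.coeff d P = MvPolynomial.coeff d Q) : P = Q := by
  ext d
  by_cases hd : deg d = m
  · exact h d hd
  · rw [hP.coeff_eq_zero (by rwa [← deg_eq_degree]), hQ.coeff_eq_zero (by rwa [← deg_eq_degree])]

lemma coeff_pderiv (i : Fin n) (P : MvPolynomial (Fin n) ℂ) (d : Fin n →₀ ℕ) :
    MvPolynomial.coeff d (MvPolynomial.pderiv i P)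
      = ((d i : ℂ) + 1) * MvPolynomial.coeff (d + single i 1) P := by
  classical
  induction P using MvPolynomial.induction_on' with
  | monomial u a =>
    rw [MvPolynomial.pderiv_monomial]
    rw [MvPolynomial.coeff_monomial, MvPolynomial.coeff_monomial]
    by_cases hu : u = d + single i 1
    · subst hu
      rw [if_pos rfl, if_pos]
      · have : (d + single i 1 : Fin n →₀ ℕ) i = d i + 1 := by
          simp [Finsupp.single_apply]
        rw [this]
        push_cast
        ring
      · rw [add_tsub_cancel_right]
    · rw [if_neg hu]
      by_cases h2 : u - single i 1 = d
      · rw [if_pos h2]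
        have hui : u i = 0 := by
          by_contra hc
          apply hu
          have hle : single i 1 ≤ u := by rw [Finsupp.single_le_iff]; omega
          rw [← h2, tsub_add_cancel_of_le hle]
        rw [hui]
        simp
      · rw [if_neg h2, mul_zero]
  | add p q hp hq =>
    rw [map_add, MvPolynomial.coeff_add, MvPolynomial.coeff_add, hp, hq]
    ring

lemma pd_coe (j : Fin n) (P : MvPolynomial (Fin n) ℂ) :
    pd j ((P : MvPolynomial (Fin n) ℂ) : FPS n) = ((MvPolynomial.pderiv j P : MvPolynomial (Fin n) ℂ) : FPS n) := by
  ext d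
  rw [coeff_pd, MvPolynomial.coeff_coe, MvPolynomial.coeff_coe, coeff_pderiv]

lemma pderiv_homog {P : MvPolynomial (Fin n) ℂ} {m : ℕ} (h : P.IsHomogeneous (m + 1)) (i : Fin n) :
    (MvPolynomial.pderiv i P).IsHomogeneous m := by
  classical
  rw [MvPolynomial.as_sum P, map_sum]
  apply MvPolynomial.IsHomogeneous.sum
  intro u hu
  rw [MvPolynomial.pderiv_monomial]
  by_cases hui : u i = 0
  · rw [show ((MvPolynomial.coeff u P) * (u i) : ℂ) = 0 by rw [hui]; simp]
    rw [map_zero]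
    exact MvPolynomial.isHomogeneous_zero _ _ _
  · apply MvPolynomial.isHomogeneous_monomial
    have hle : single i 1 ≤ u := by rw [Finsupp.single_le_iff]; omega
    have hdu : u.degree = m + 1 := by
      rw [Finsupp.degree_eq_weight_one]
      exact h (MvPolynomial.mem_support_iff.mp hu)
    have := deg_sub_lt hle
    rw [← deg_eq_degree]
    rw [← deg_eq_degree] at hdu
    omega

lemma euler {P : MvPolynomial (Fin n) ℂ} {m : ℕ} (h : P.IsHomogeneous m) :
    ∑ i, MvPolynomial.X i * MvPolynomial.pderiv i P = (m : ℂ) • P := by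
  classical
  conv_lhs => rw [MvPolynomial.as_sum P]
  have step : ∀ i : Fin n, MvPolynomial.X i
        * MvPolynomial.pderiv i (∑ u ∈ P.support, MvPolynomial.monomial u (MvPolynomial.coeff u P))
      = ∑ u ∈ P.support, MvPolynomial.monomial u ((u i : ℂ) * MvPolynomial.coeff u P) := by
    intro i
    rw [map_sum, Finset.mul_sum]
    apply Finset.sum_congr rfl
    intro u hu
    rw [MvPolynomial.pderiv_monomial]
    rw [show (MvPolynomial.X i : MvPolynomial (Fin n) ℂ)
        = MvPolynomial.monomial (single i 1) 1 from rfl]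
    rw [MvPolynomial.monomial_mul, one_mul]
    by_cases hui : u i = 0
    · rw [hui]
      simp
    · have hle : single i 1 ≤ u := by rw [Finsupp.single_le_iff]; omega
      rw [add_comm, tsub_add_cancel_of_le hle]
      rw [mul_comm]
  rw [Finset.sum_congr rfl (fun i _ => step i)]
  rw [Finset.sum_comm]
  conv_rhs => rw [MvPolynomial.as_sum P]
  rw [Finset.smul_sum]
  apply Finset.sum_congr rfl
  intro u hu
  rw [← map_sum, ← Finset.sum_mul]
  have hsum : (∑ i, (u i : ℂ)) = (m : ℂ) := by
    have h1 : ∑ i, u i = deg u := by simp [deg, Finsupp.sum_fintype]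
    have h2 : deg u = m := by
      rw [deg_eq_degree, Finsupp.degree_eq_weight_one]
      exact h (MvPolynomial.mem_support_iff.mp hu)
    rw [← h2, ← h1]
    push_cast
    rfl
  rw [hsum, MvPolynomial.smul_monomial]
  rw [smul_eq_mul]

lemma coe_smul (c : ℂ) (P : MvPolynomial (Fin n) ℂ) :
    ((c • P : MvPolynomial (Fin n) ℂ) : FPS n) = c • (P : FPS n) := by
  ext e
  rw [MvPolynomial.coeff_coe, MvPowerSeries.coeff_smul, MvPolynomial.coeff_smul,
    MvPolynomial.coeff_coe]
  rfl

lemma coeff_coe_mul (A B : MvPolynomial (Fin n) ℂ) (d : Fin n →₀ ℕ) :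
    MvPolynomial.coeff d (A * B) = MvPowerSeries.coeff (R := ℂ) d ((A : FPS n) * (B : FPS n)) := by
  rw [← MvPolynomial.coe_mul, MvPolynomial.coeff_coe]

lemma homog_dvd_eq_smul {p p' : MvPolynomial (Fin n) ℂ} {k : ℕ}
    (hp : p.IsHomogeneous k) (hp' : p'.IsHomogeneous k) (hp'0 : p' ≠ 0) (hdvd : p ∣ p') :
    ∃ c : ℂ, c ≠ 0 ∧ p' = c • p := by
  classical
  obtain ⟨u, hu⟩ := hdvd
  have happ : p' = p * MvPolynomial.homogeneousComponent 0 u := by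
    have h1 : MvPolynomial.homogeneousComponent k p' = p' := by
      rw [MvPolynomial.homogeneousComponent_of_mem
        ((MvPolynomial.mem_homogeneousSubmodule _ _).mpr hp'), if_pos rfl]
    have h2 : p' = ∑ j ∈ Finset.range (u.totalDegree + 1),
        p * MvPolynomial.homogeneousComponent j u := by
      rw [← Finset.mul_sum, MvPolynomial.sum_homogeneousComponent, ← hu]
    calc p' = MvPolynomial.homogeneousComponent k p' := h1.symm
      _ = ∑ j ∈ Finset.range (u.totalDegree + 1),
            MvPolynomial.homogeneousComponent k (p * MvPolynomial.homogeneousComponent j u) := by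
          conv_lhs => rw [h2]
          rw [map_sum]
      _ = p * MvPolynomial.homogeneousComponent 0 u := by
          rw [Finset.sum_eq_single 0]
          · have hmem : p * MvPolynomial.homogeneousComponent 0 u
                ∈ MvPolynomial.homogeneousSubmodule (Fin n) ℂ (k + 0) :=
              (MvPolynomial.mem_homogeneousSubmodule _ _).mpr
                (hp.mul (MvPolynomial.homogeneousComponent_isHomogeneous 0 u))
            rw [MvPolynomial.homogeneousComponent_of_mem hmem, if_pos (by omega)]
          · intro j _ hj
            have hmem : p * MvPolynomial.homogeneousComponent j u
                ∈ MvPolynomial.homogeneousSubmodule (Fin n) ℂ (k + j) :=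
              (MvPolynomial.mem_homogeneousSubmodule _ _).mpr
                (hp.mul (MvPolynomial.homogeneousComponent_isHomogeneous j u))
            rw [MvPolynomial.homogeneousComponent_of_mem hmem, if_neg (by omega)]
          · intro hmem
            exact absurd (Finset.mem_range.mpr (by omega)) hmem
  rw [MvPolynomial.homogeneousComponent_zero] at happ
  refine ⟨MvPolynomial.coeff 0 u, ?_, ?_⟩
  · intro h0
    rw [h0] at happ
    simp at happ
    exact hp'0 happ
  · rw [happ, MvPolynomial.smul_eq_C_mul, mul_comm]


lemma conv_succ' {F G : FPS n} {α β α' β' : ℕ} (hF : OrderGE F α) (hG : OrderGE G β)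
    {d : Fin n →₀ ℕ} (hd : deg d = α + β + 1) (hα : α' = α + 1) (hβ : β' = β + 1) :
    MvPowerSeries.coeff (R := ℂ) d (F * G)
      = MvPowerSeries.coeff (R := ℂ) d (Hm α F * Hm β' G)
        + MvPowerSeries.coeff (R := ℂ) d (Hm α' F * Hm β G) := by
  subst hα hβ
  exact conv_succ hF hG hd

lemma homog_cast {P : MvPolynomial (Fin n) ℂ} {a b : ℕ} (h : P.IsHomogeneous a) (hab : a = b) :
    P.IsHomogeneous b := hab ▸ h

lemma expand_sum_pderiv (r : MvPolynomial (Fin n) ℂ) (v : Fin n → MvPolynomial (Fin n) ℂ)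
    (i : Fin n) :
    ∑ j, v j * MvPolynomial.pderiv j (r * MvPolynomial.X i)
      = (∑ j, v j * MvPolynomial.pderiv j r) * MvPolynomial.X i + r * v i := by
  classical
  have step : ∀ j, v j * MvPolynomial.pderiv j (r * MvPolynomial.X i)
      = v j * MvPolynomial.pderiv j r * MvPolynomial.X i
        + v j * (r * MvPolynomial.pderiv j (MvPolynomial.X i)) := by
    intro j
    rw [MvPolynomial.pderiv_mul]
    ring
  rw [Finset.sum_congr rfl (fun j _ => step j), Finset.sum_add_distrib, Finset.sum_mul]
  congr 1
  rw [Finset.sum_eq_single i]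
  · rw [MvPolynomial.pderiv_X_self, mul_one, mul_comm]
  · intro b _ hb
    rw [MvPolynomial.pderiv_X_of_ne (Ne.symm hb), mul_zero, mul_zero]
  · intro hmem
    exact absurd (Finset.mem_univ i) hmem

lemma factor_sum_X (r : MvPolynomial (Fin n) ℂ) (w : MvPolynomial (Fin n) ℂ) {m : ℕ}
    (hw : w.IsHomogeneous m) :
    ∑ j, (r * MvPolynomial.X j) * MvPolynomial.pderiv j w = r * (MvPolynomial.C (m : ℂ) * w) := by
  have : ∀ j, (r * MvPolynomial.X j) * MvPolynomial.pderiv j w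
      = r * (MvPolynomial.X j * MvPolynomial.pderiv j w) := fun j => by ring
  rw [Finset.sum_congr rfl (fun j _ => this j), ← Finset.mul_sum, euler hw,
    MvPolynomial.smul_eq_C_mul]


/-- if `X̂` is regular dicritic, `Ŷ` is dicritic, both of the same
order `k+1`, and `[X̂,Ŷ] = 0`, then `Ŷ = c X̂` for some `c ≠ 0`. -/
theorem dicritic_commuting_is_multiple
    (n : ℕ) (k : ℕ) (hk : 1 ≤ k) (X Y : FVF n)
    (hX : IsRegDicriticVF X k) (hY : IsDicriticVF Y k)
    (hcomm : CommuteVF X Y) :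
    ∃ c : ℂ, c ≠ 0 ∧ Y = c • X := by
  classical
  obtain ⟨-, hXord, p, q, hp, hp0, hXk1, hq, hXk2, i₀, j₀, hcop⟩ := hX
  obtain ⟨-, hYord, p', hp', hp'0, hYk1⟩ := hY
  -- the bracket identity, coefficientwise
  have hbr : ∀ i, (∑ j, X (Z j) * pd j (Y (Z i))) = ∑ j, Y (Z j) * pd j (X (Z i)) := by
    intro i
    rw [← deriv_eq_sum X (Y (Z i)), ← deriv_eq_sum Y (X (Z i))]
    exact hcomm (Z i)
  set Q' : Fin n → MvPolynomial (Fin n) ℂ := fun i => HmP (k + 2) (Y (Z i)) with hQ'def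
  have hQ'h : ∀ i, (Q' i).IsHomogeneous (k + 2) := fun i => HmP_isHomogeneous _ _
  have hHmX1 : ∀ j, Hm (k + 1) (X (Z j))
      = ((p * MvPolynomial.X j : MvPolynomial (Fin n) ℂ) : FPS n) := by
    intro j
    apply Hm_eq_coe (hp.mul (MvPolynomial.isHomogeneous_X ℂ j))
    intro d hd
    rw [hXk1 j d hd, MvPolynomial.coe_mul, MvPolynomial.coe_X]
    rfl
  have hHmX2 : ∀ j, Hm (k + 2) (X (Z j)) = ((q j : MvPolynomial (Fin n) ℂ) : FPS n) := by
    intro j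
    apply Hm_eq_coe (hq j)
    intro d hd
    rw [hXk2 j d hd, MvPolynomial.coeff_coe]
  have hHmY1 : ∀ j, Hm (k + 1) (Y (Z j))
      = ((p' * MvPolynomial.X j : MvPolynomial (Fin n) ℂ) : FPS n) := by
    intro j
    apply Hm_eq_coe (hp'.mul (MvPolynomial.isHomogeneous_X ℂ j))
    intro d hd
    rw [hYk1 j d hd, MvPolynomial.coe_mul, MvPolynomial.coe_X]
    rfl
  have hHmY2 : ∀ j, Hm (k + 2) (Y (Z j)) = ((Q' j : MvPolynomial (Fin n) ℂ) : FPS n) :=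
    fun j => Hm_eq_coe_HmP _ _
  have hordpdY : ∀ i j, OrderGE (pd j (Y (Z i))) k := fun i j => OrderGE_pd (hYord i) j
  have hordpdX : ∀ i j, OrderGE (pd j (X (Z i))) k := fun i j => OrderGE_pd (hXord i) j
  -- Stage 1 : the degree 2k+2 bracket identity as polynomials
  have key1 : ∀ i,
      (∑ j, (p * MvPolynomial.X j) * MvPolynomial.pderiv j (Q' i))
        + ∑ j, q j * MvPolynomial.pderiv j (p' * MvPolynomial.X i)
      = (∑ j, (p' * MvPolynomial.X j) * MvPolynomial.pderiv j (q i))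
        + ∑ j, Q' j * MvPolynomial.pderiv j (p * MvPolynomial.X i) := by
    intro i
    have hhom1 : ((∑ j, (p * MvPolynomial.X j) * MvPolynomial.pderiv j (Q' i))
        + ∑ j, q j * MvPolynomial.pderiv j (p' * MvPolynomial.X i)).IsHomogeneous
          ((k + 1) + (k + 1)) := by
      apply MvPolynomial.IsHomogeneous.add
      · apply MvPolynomial.IsHomogeneous.sum
        intro j _
        exact (hp.mul (MvPolynomial.isHomogeneous_X ℂ j)).mul
          (pderiv_homog (homog_cast (hQ'h i) (by omega)) j)
      · apply MvPolynomial.IsHomogeneous.sum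
        intro j _
        exact homog_cast ((hq j).mul
          (pderiv_homog (homog_cast (hp'.mul (MvPolynomial.isHomogeneous_X ℂ i)) rfl) j)) (by omega)
    have hhom2 : ((∑ j, (p' * MvPolynomial.X j) * MvPolynomial.pderiv j (q i))
        + ∑ j, Q' j * MvPolynomial.pderiv j (p * MvPolynomial.X i)).IsHomogeneous
          ((k + 1) + (k + 1)) := by
      apply MvPolynomial.IsHomogeneous.add
      · apply MvPolynomial.IsHomogeneous.sum
        intro j _
        exact (hp'.mul (MvPolynomial.isHomogeneous_X ℂ j)).mul
          (pderiv_homog (homog_cast (hq i) (by omega)) j)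
      · apply MvPolynomial.IsHomogeneous.sum
        intro j _
        exact homog_cast ((hQ'h j).mul
          (pderiv_homog (homog_cast (hp.mul (MvPolynomial.isHomogeneous_X ℂ i)) rfl) j)) (by omega)
    apply homog_ext hhom1 hhom2
    intro d hd
    have termL : ∀ j, MvPowerSeries.coeff (R := ℂ) d (X (Z j) * pd j (Y (Z i)))
        = MvPolynomial.coeff d ((p * MvPolynomial.X j) * MvPolynomial.pderiv j (Q' i))
          + MvPolynomial.coeff d (q j * MvPolynomial.pderiv j (p' * MvPolynomial.X i)) := by
      intro j
      rw [conv_succ' (hXord j) (hordpdY i j) (show deg d = (k + 1) + k + 1 by omega)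
        (show k + 2 = (k + 1) + 1 by omega) rfl]
      rw [Hm_pd, Hm_pd, hHmX1 j, hHmX2 j,
        show k + 1 + 1 = k + 2 by omega, hHmY2 i, hHmY1 i, pd_coe, pd_coe,
        ← coeff_coe_mul, ← coeff_coe_mul]
    have termR : ∀ j, MvPowerSeries.coeff (R := ℂ) d (Y (Z j) * pd j (X (Z i)))
        = MvPolynomial.coeff d ((p' * MvPolynomial.X j) * MvPolynomial.pderiv j (q i))
          + MvPolynomial.coeff d (Q' j * MvPolynomial.pderiv j (p * MvPolynomial.X i)) := by
      intro j
      rw [conv_succ' (hYord j) (hordpdX i j) (show deg d = (k + 1) + k + 1 by omega)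
        (show k + 2 = (k + 1) + 1 by omega) rfl]
      rw [Hm_pd, Hm_pd, hHmY1 j, hHmY2 j,
        show k + 1 + 1 = k + 2 by omega, hHmX2 i, hHmX1 i, pd_coe, pd_coe,
        ← coeff_coe_mul, ← coeff_coe_mul]
    have hbrc : ∑ j, MvPowerSeries.coeff (R := ℂ) d (X (Z j) * pd j (Y (Z i)))
        = ∑ j, MvPowerSeries.coeff (R := ℂ) d (Y (Z j) * pd j (X (Z i))) := by
      rw [← map_sum, ← map_sum, hbr i]
    rw [MvPolynomial.coeff_add, MvPolynomial.coeff_sum, MvPolynomial.coeff_sum,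
      MvPolynomial.coeff_add, MvPolynomial.coeff_sum, MvPolynomial.coeff_sum,
      ← Finset.sum_add_distrib, ← Finset.sum_add_distrib,
      Finset.sum_congr rfl (fun j (_ : j ∈ Finset.univ) => (termL j).symm),
      Finset.sum_congr rfl (fun j (_ : j ∈ Finset.univ) => (termR j).symm)]
    exact hbrc
  -- Stage 1 algebra : derive p' = c • p
  set A : MvPolynomial (Fin n) ℂ := ∑ j, q j * MvPolynomial.pderiv j p' with hA
  set B : MvPolynomial (Fin n) ℂ := ∑ j, Q' j * MvPolynomial.pderiv j p with hB
  have key2 : ∀ i, MvPolynomial.C ((k : ℂ) + 1) * (p * Q' i - p' * q i)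
      = (B - A) * MvPolynomial.X i := by
    intro i
    have h1 := key1 i
    rw [factor_sum_X p (Q' i) (hQ'h i), factor_sum_X p' (q i) (hq i),
      expand_sum_pderiv p' q i, expand_sum_pderiv p Q' i, ← hA, ← hB] at h1
    have hc1 : ((k + 2 : ℕ) : ℂ) = (k : ℂ) + 2 := by push_cast; ring
    rw [hc1] at h1
    have hc2 : (MvPolynomial.C ((k : ℂ) + 2) : MvPolynomial (Fin n) ℂ)
        = MvPolynomial.C (k : ℂ) + 2 := by
      rw [map_add, map_ofNat]
    have hc3 : (MvPolynomial.C ((k : ℂ) + 1) : MvPolynomial (Fin n) ℂ)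
        = MvPolynomial.C (k : ℂ) + 1 := by
      rw [map_add, map_one]
    rw [hc2] at h1
    rw [hc3]
    linear_combination h1
  have hpq : p * (MvPolynomial.X j₀ * Q' i₀ - MvPolynomial.X i₀ * Q' j₀)
      = p' * (MvPolynomial.X j₀ * q i₀ - MvPolynomial.X i₀ * q j₀) := by
    have h5 : MvPolynomial.C ((k : ℂ) + 1)
        * (p * (MvPolynomial.X j₀ * Q' i₀ - MvPolynomial.X i₀ * Q' j₀)
          - p' * (MvPolynomial.X j₀ * q i₀ - MvPolynomial.X i₀ * q j₀)) = 0 := by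
      linear_combination MvPolynomial.X j₀ * key2 i₀ - MvPolynomial.X i₀ * key2 j₀
    rcases mul_eq_zero.mp h5 with h | h
    · exfalso
      rw [MvPolynomial.C_eq_zero] at h
      have : (k : ℂ) + 1 ≠ 0 := by
        have : ((k + 1 : ℕ) : ℂ) ≠ 0 := Nat.cast_ne_zero.mpr (by omega)
        push_cast at this
        exact this
      exact this h
    · linear_combination h
  have hdvd : p ∣ p' := by
    apply hcop.dvd_of_dvd_mul_right (y := p')
    exact ⟨MvPolynomial.X j₀ * Q' i₀ - MvPolynomial.X i₀ * Q' j₀, hpq.symm⟩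
  obtain ⟨c, hc0, hp'c⟩ := homog_dvd_eq_smul hp hp' hp'0 hdvd
  refine ⟨c, hc0, ?_⟩
  -- Stage 2 : D := Y - c • X vanishes
  set D : FVF n := Y - c • X with hDdef
  have hDZ : ∀ g : FPS n, D g = Y g - c • X g := by intro g; simp [hDdef]
  have hG0 : ∀ i d, deg d < k + 2 → MvPowerSeries.coeff (R := ℂ) d (D (Z i)) = 0 := by
    intro i d hd
    rw [hDZ, map_sub, MvPowerSeries.coeff_smul]
    rcases Nat.lt_or_ge (deg d) (k + 1) with h | h
    · rw [hYord i d h, hXord i d h, mul_zero, sub_zero]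
    · have hdk : deg d = k + 1 := by omega
      rw [hYk1 i d hdk, hXk1 i d hdk, hp'c, coe_smul, smul_mul_assoc,
        MvPowerSeries.coeff_smul]
      ring
  have hcommD : ∀ g, X (D g) = D (X g) := by
    intro g
    rw [hDZ, hDZ, map_sub, Derivation.map_smul, hcomm g]
  have hbr2 : ∀ i, (∑ j, X (Z j) * pd j (D (Z i))) = ∑ j, D (Z j) * pd j (X (Z i)) := by
    intro i
    rw [← deriv_eq_sum X (D (Z i)), ← deriv_eq_sum D (X (Z i))]
    exact hcommD (Z i)
  have main : ∀ m, k + 2 ≤ m → ∀ i d, deg d < m → MvPowerSeries.coeff (R := ℂ) d (D (Z i)) = 0 := by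
    intro m hm
    induction m, hm using Nat.le_induction with
    | base => exact hG0
    | succ m hm ih =>
      intro i d hd
      rcases Nat.lt_or_ge (deg d) m with h | h
      · exact ih i d h
      · have hdm : deg d = m := by omega
        obtain ⟨M, rfl⟩ : ∃ M, m = M + 1 := ⟨m - 1, by omega⟩
        have hMk : k + 1 ≤ M := by omega
        set w : Fin n → MvPolynomial (Fin n) ℂ := fun i => HmP (M + 1) (D (Z i)) with hwdef
        have hwh : ∀ i, (w i).IsHomogeneous (M + 1) := fun i => HmP_isHomogeneous _ _
        have hGord : ∀ i, OrderGE (D (Z i)) (M + 1) := fun i e he => ih i e he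
        have hHmG : ∀ i, Hm (M + 1) (D (Z i)) = ((w i : MvPolynomial (Fin n) ℂ) : FPS n) :=
          fun i => Hm_eq_coe_HmP _ _
        have keyS : ∀ i, (∑ j, (p * MvPolynomial.X j) * MvPolynomial.pderiv j (w i))
            = ∑ j, w j * MvPolynomial.pderiv j (p * MvPolynomial.X i) := by
          intro i
          have hhomL : (∑ j, (p * MvPolynomial.X j) * MvPolynomial.pderiv j (w i)).IsHomogeneous
              ((k + 1) + M) := by
            apply MvPolynomial.IsHomogeneous.sum
            intro j _
            exact (hp.mul (MvPolynomial.isHomogeneous_X ℂ j)).mul (pderiv_homog (hwh i) j)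
          have hhomR : (∑ j, w j * MvPolynomial.pderiv j
              (p * MvPolynomial.X i)).IsHomogeneous ((k + 1) + M) := by
            apply MvPolynomial.IsHomogeneous.sum
            intro j _
            exact homog_cast ((hwh j).mul
              (pderiv_homog (homog_cast (hp.mul (MvPolynomial.isHomogeneous_X ℂ i)) rfl) j))
              (by omega)
          apply homog_ext hhomL hhomR
          intro d' hd'
          have termL : ∀ j, MvPowerSeries.coeff (R := ℂ) d' (X (Z j) * pd j (D (Z i)))
              = MvPolynomial.coeff d' ((p * MvPolynomial.X j) * MvPolynomial.pderiv j (w i)) := by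
            intro j
            rw [conv_exact (hXord j) (OrderGE_pd (hGord i) j)
              (show deg d' = (k + 1) + M by omega)]
            rw [Hm_pd, hHmX1 j, hHmG i, pd_coe, ← coeff_coe_mul]
          have termR : ∀ j, MvPowerSeries.coeff (R := ℂ) d' (D (Z j) * pd j (X (Z i)))
              = MvPolynomial.coeff d' (w j * MvPolynomial.pderiv j (p * MvPolynomial.X i)) := by
            intro j
            rw [conv_exact (hGord j) (hordpdX i j) (show deg d' = (M + 1) + k by omega)]
            rw [Hm_pd, hHmG j, hHmX1 i, pd_coe, ← coeff_coe_mul]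
          have hbrc : ∑ j, MvPowerSeries.coeff (R := ℂ) d' (X (Z j) * pd j (D (Z i)))
              = ∑ j, MvPowerSeries.coeff (R := ℂ) d' (D (Z j) * pd j (X (Z i))) := by
            rw [← map_sum, ← map_sum, hbr2 i]
          rw [MvPolynomial.coeff_sum, MvPolynomial.coeff_sum,
            Finset.sum_congr rfl (fun j (_ : j ∈ Finset.univ) => (termL j).symm),
            Finset.sum_congr rfl (fun j (_ : j ∈ Finset.univ) => (termR j).symm)]
          exact hbrc
        set Wp : MvPolynomial (Fin n) ℂ := ∑ j, w j * MvPolynomial.pderiv j p with hWpdef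
        have keyP : ∀ i, MvPolynomial.C ((M : ℂ)) * (p * w i) = Wp * MvPolynomial.X i := by
          intro i
          have h1 := keyS i
          rw [factor_sum_X p (w i) (hwh i), expand_sum_pderiv p w i, ← hWpdef] at h1
          have hc1 : ((M + 1 : ℕ) : ℂ) = (M : ℂ) + 1 := by push_cast; ring
          rw [hc1, map_add, map_one] at h1
          linear_combination h1
        have hWp0 : Wp = 0 := by
          have hsum : ∑ i, MvPolynomial.C ((M : ℂ)) * (p * w i) * MvPolynomial.pderiv i p
              = ∑ i, (Wp * MvPolynomial.X i) * MvPolynomial.pderiv i p :=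
            Finset.sum_congr rfl (fun i _ => by rw [keyP i])
          have hL : ∑ i, MvPolynomial.C ((M : ℂ)) * (p * w i) * MvPolynomial.pderiv i p
              = MvPolynomial.C ((M : ℂ)) * (p * Wp) := by
            rw [hWpdef, Finset.mul_sum, Finset.mul_sum]
            exact Finset.sum_congr rfl (fun i _ => by ring)
          have hR : ∑ i, (Wp * MvPolynomial.X i) * MvPolynomial.pderiv i p
              = Wp * (MvPolynomial.C ((k : ℂ)) * p) := by
            have : ∀ i, (Wp * MvPolynomial.X i) * MvPolynomial.pderiv i p
                = Wp * (MvPolynomial.X i * MvPolynomial.pderiv i p) := fun i => by ring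
            rw [Finset.sum_congr rfl (fun i _ => this i), ← Finset.mul_sum, euler hp,
              MvPolynomial.smul_eq_C_mul]
          have hfinal : (MvPolynomial.C ((M : ℂ)) - MvPolynomial.C ((k : ℂ))) * (p * Wp) = 0 := by
            rw [hL] at hsum
            rw [hR] at hsum
            linear_combination hsum
          rcases mul_eq_zero.mp hfinal with h' | h'
          · exfalso
            rw [← map_sub, MvPolynomial.C_eq_zero, sub_eq_zero] at h'
            have : (M : ℂ) ≠ (k : ℂ) := by
              intro hMk'
              have := Nat.cast_injective (R := ℂ) hMk'
              omega
            exact this h'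
          · rcases mul_eq_zero.mp h' with h'' | h''
            · exact absurd h'' hp0
            · exact h''
        have hwi0 : ∀ i, w i = 0 := by
          intro i
          have h1 := keyP i
          rw [hWp0, zero_mul] at h1
          rcases mul_eq_zero.mp h1 with h' | h'
          · exfalso
            rw [MvPolynomial.C_eq_zero, Nat.cast_eq_zero] at h'
            omega
          · rcases mul_eq_zero.mp h' with h'' | h''
            · exact absurd h'' hp0
            · exact h''
        have : MvPowerSeries.coeff (R := ℂ) d (D (Z i)) = MvPolynomial.coeff d (w i) := by
          rw [hwdef]
          rw [HmP_coeff, if_pos hdm]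
        rw [this, hwi0 i, MvPolynomial.coeff_zero]
  have hDzero : ∀ i, D (Z i) = 0 := by
    intro i
    ext d
    rw [map_zero]
    exact main (deg d + (k + 2)) (by omega) i d (by omega)
  apply Derivation.ext
  intro g
  have h0 := derivation_zero_of_coords D hDzero g
  rw [hDZ g, sub_eq_zero] at h0
  rw [h0]
  simp

end FormalGroups
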